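/- Let x(t) and y(t) be real polynomials of degrees d_x and d_y respectively, with (x'(t), y'(t)) ≠ (0,0) for all t, and assume all self-intersections of the plane curve t ↦ (x(t), y(t)) are transverse double points. Then the number of double points is at most (1/2)(d_x - 1)(d_y - 1). -/

import Mathlib

open MvPolynomial

section TD
set_option linter.unusedSectionVars false
variable {σ : Type*} {R : Type*} [CommRing R] [IsDomain R]

lemma fdeg_eq (d : σ →₀ ℕ) : d.degree = d.sum (fun _ e => e) := rfl

lemma fdeg_add (a b : σ →₀ ℕ) : (a + b).degree = a.degree + b.degree := by
  classical
  simp [fdeg_eq, Finsupp.sum_add_index]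

lemma exists_coeff_totalDegree {p : MvPolynomial σ R} (hp : p ≠ 0) :
    ∃ s ∈ p.support, s.degree = p.totalDegree := by
  obtain ⟨s, hs, hs2⟩ := Finset.exists_mem_eq_sup p.support
    (support_nonempty.mpr hp) (fun m => m.sum fun _ e => e)
  exact ⟨s, hs, by rw [fdeg_eq]; exact hs2.symm⟩

lemma le_totalDegree' {p : MvPolynomial σ R} {s : σ →₀ ℕ} (h : coeff s p ≠ 0) :
    s.degree ≤ p.totalDegree := by
  rw [fdeg_eq]; exact le_totalDegree (mem_support_iff.mpr h)

lemma homogeneousComponent_totalDegree_ne_zero {p : MvPolynomial σ R} (hp : p ≠ 0) :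
    homogeneousComponent p.totalDegree p ≠ 0 := by
  obtain ⟨s, hs, hs2⟩ := exists_coeff_totalDegree hp
  intro h
  have h2 := coeff_homogeneousComponent (φ := p) p.totalDegree s
  rw [h, if_pos hs2] at h2
  simp only [coeff_zero] at h2
  exact (mem_support_iff.mp hs) h2.symm

lemma homogeneousComponent_top_mul (p q : MvPolynomial σ R) :
    homogeneousComponent (p.totalDegree + q.totalDegree) (p * q)
      = homogeneousComponent p.totalDegree p * homogeneousComponent q.totalDegree q := by
  classical
  ext d
  rw [coeff_homogeneousComponent, coeff_mul, coeff_mul]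
  split_ifs with hd
  · apply Finset.sum_congr rfl
    intro uv huv
    rw [Finset.HasAntidiagonal.mem_antidiagonal] at huv
    rw [coeff_homogeneousComponent, coeff_homogeneousComponent]
    by_cases hz1 : coeff uv.1 p = 0
    · simp [hz1]
    by_cases hz2 : coeff uv.2 q = 0
    · simp [hz2]
    have hle1 := le_totalDegree' hz1
    have hle2 := le_totalDegree' hz2
    have hsum : uv.1.degree + uv.2.degree = p.totalDegree + q.totalDegree := by
      rw [← fdeg_add, huv, hd]
    rw [if_pos (by omega), if_pos (by omega)]
  · symm
    apply Finset.sum_eq_zero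
    intro uv huv
    rw [Finset.HasAntidiagonal.mem_antidiagonal] at huv
    rw [coeff_homogeneousComponent, coeff_homogeneousComponent]
    by_cases h1 : uv.1.degree = p.totalDegree
    · by_cases h2 : uv.2.degree = q.totalDegree
      · exfalso; apply hd
        rw [← huv, fdeg_add, h1, h2]
      · rw [if_neg h2, mul_zero]
    · rw [if_neg h1, zero_mul]

lemma totalDegree_mul_eq {p q : MvPolynomial σ R} (hp : p ≠ 0) (hq : q ≠ 0) :
    (p * q).totalDegree = p.totalDegree + q.totalDegree := by
  refine le_antisymm (totalDegree_mul p q) ?_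
  by_contra h
  push_neg at h
  have h0 : homogeneousComponent (p.totalDegree + q.totalDegree) (p * q) = 0 :=
    homogeneousComponent_eq_zero _ _ h
  rw [homogeneousComponent_top_mul] at h0
  exact (mul_ne_zero (homogeneousComponent_totalDegree_ne_zero hp)
    (homogeneousComponent_totalDegree_ne_zero hq)) h0
end TD

noncomputable section

lemma fin2sum (f : Fin 2 →₀ ℕ) : (f.sum fun _ e => e) = f 0 + f 1 := by
  rw [Finsupp.sum_fintype _ _ (fun _ => rfl), Fin.sum_univ_two]

def e2 : (Fin 2 →₀ ℕ) ≃ ℕ × ℕ :=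
  Finsupp.equivFunOnFinite.trans (finTwoArrowEquiv ℕ)

def idxEquiv (d : ℕ) :
    {n : Fin 2 →₀ ℕ | (n.sum fun _ e => e) ≤ d} ≃ {p : ℕ × ℕ // p.1 + p.2 ≤ d} :=
  (Equiv.subtypeEquiv e2 (by
    intro n
    simp only [Set.mem_setOf_eq, fin2sum, e2, Equiv.trans_apply, finTwoArrowEquiv,
      Equiv.coe_fn_mk, Finsupp.equivFunOnFinite_apply]
    rfl))

def diagFinset (d : ℕ) : Finset (ℕ × ℕ) :=
  (Finset.range (d + 1)).biUnion fun j => Finset.HasAntidiagonal.antidiagonal j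

lemma mem_diagFinset {d : ℕ} {p : ℕ × ℕ} : p ∈ diagFinset d ↔ p.1 + p.2 ≤ d := by
  simp only [diagFinset, Finset.mem_biUnion, Finset.mem_range, Finset.HasAntidiagonal.mem_antidiagonal]
  constructor
  · rintro ⟨j, hj, h⟩; omega
  · intro h; exact ⟨p.1 + p.2, by omega, rfl⟩

lemma card_diagFinset (d : ℕ) : 2 * (diagFinset d).card = (d + 1) * (d + 2) := by
  rw [diagFinset, Finset.card_biUnion]
  · have h0 : ∑ j ∈ Finset.range (d + 1), (Finset.HasAntidiagonal.antidiagonal j).card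
        = ∑ j ∈ Finset.range (d + 1), (j + 1) := by
      simp [Finset.Nat.card_antidiagonal]
    have h1 : ∑ i ∈ Finset.range (d + 2), i
        = (∑ j ∈ Finset.range (d + 1), (j + 1)) + 0 := Finset.sum_range_succ' _ _
    have h2 := Finset.sum_range_id_mul_two (d + 2)
    rw [h0, ← Nat.add_zero (∑ j ∈ Finset.range (d + 1), (j + 1)), ← h1]
    have h3 : (d + 2) * (d + 2 - 1) = (d + 1) * (d + 2) := by
      have : d + 2 - 1 = d + 1 := rfl
      rw [this, Nat.mul_comm]
    rw [Nat.mul_comm, h2, h3]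
  · intro a _ b _ hab
    simp only [Finset.disjoint_left, Finset.HasAntidiagonal.mem_antidiagonal]
    intro p h1 h2; omega

instance fintypeIdx (d : ℕ) : Fintype {n : Fin 2 →₀ ℕ | (n.sum fun _ e => e) ≤ d} :=
  Fintype.ofEquiv _ ((idxEquiv d).trans
    (Equiv.subtypeEquivRight (fun p => mem_diagFinset.symm))).symm

lemma rank2 (d : ℕ) :
    2 * Module.finrank ℝ (restrictTotalDegree (Fin 2) ℝ d) = (d + 1) * (d + 2) := by
  classical
  rw [restrictTotalDegree, Module.finrank_eq_card_basis (basisRestrictSupport ℝ _)]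
  rw [Fintype.card_congr ((idxEquiv d).trans
    (Equiv.subtypeEquivRight (fun p => mem_diagFinset.symm)))]
  rw [Fintype.card_coe]
  exact card_diagFinset d

noncomputable section

abbrev A2 := MvPolynomial (Fin 2) ℝ

lemma totalDegree_mul_eq' {p q : A2} (hp : p ≠ 0) (hq : q ≠ 0) :
    (p * q).totalDegree = p.totalDegree + q.totalDegree := totalDegree_mul_eq hp hq

lemma rank2' (d : ℕ) :
    2 * Module.finrank ℝ (restrictTotalDegree (Fin 2) ℝ d) = (d + 1) * (d + 2) := rank2 d

def Lq (q r : ℝ × ℝ) : A2 :=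
  if r.1 ≠ q.1 then C (q.1 - r.1)⁻¹ * (X 0 - C r.1) else C (q.2 - r.2)⁻¹ * (X 1 - C r.2)

lemma Lq_deg (q r : ℝ × ℝ) : (Lq q r).totalDegree ≤ 1 := by
  rw [Lq]
  split_ifs
  all_goals
    refine (totalDegree_mul _ _).trans ?_
    simp only [totalDegree_C, zero_add]
    rw [sub_eq_add_neg]
    refine (totalDegree_add _ _).trans ?_
    simp [totalDegree_neg]

lemma Lq_self {q r : ℝ × ℝ} (hrq : r ≠ q) : aeval ![q.1, q.2] (Lq q r) = 1 := by
  rw [Lq]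
  split_ifs with h
  · simp only [map_mul, map_sub, aeval_X, aeval_C, algebraMap_eq,
      Matrix.cons_val_zero]
    field_simp
    simp only [Algebra.algebraMap_self, RingHom.id_apply]
    exact one_div_mul_cancel (sub_ne_zero.mpr (Ne.symm h))
  · push_neg at h
    have h2 : q.2 - r.2 ≠ 0 := by
      intro hc
      exact hrq (Prod.ext h (by linarith))
    simp only [map_mul, map_sub, aeval_X, aeval_C, algebraMap_eq,
      Matrix.cons_val_one, Matrix.head_cons]
    field_simp
    simp only [Algebra.algebraMap_self, RingHom.id_apply, Matrix.cons_val_zero]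
    exact one_div_mul_cancel h2

lemma Lq_vanish (q r : ℝ × ℝ) : aeval ![r.1, r.2] (Lq q r) = 0 := by
  rw [Lq]
  split_ifs with h <;> simp

lemma interp (T : Finset (ℝ × ℝ)) {q : ℝ × ℝ} (hq : q ∈ T) :
    ∃ f : A2, f.totalDegree ≤ T.card - 1 ∧ aeval ![q.1, q.2] f = 1 ∧
      ∀ r ∈ T, r ≠ q → aeval ![r.1, r.2] f = 0 := by
  classical
  refine ⟨∏ r ∈ T.erase q, Lq q r, ?_, ?_, ?_⟩
  · calc (∏ r ∈ T.erase q, Lq q r).totalDegree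
        ≤ ∑ r ∈ T.erase q, (Lq q r).totalDegree := totalDegree_finset_prod _ _
      _ ≤ ∑ _r ∈ T.erase q, 1 := Finset.sum_le_sum (fun r _ => Lq_deg q r)
      _ = (T.erase q).card := by simp
      _ ≤ T.card - 1 := by rw [Finset.card_erase_of_mem hq]
  · rw [map_prod]
    exact Finset.prod_eq_one fun r hr => Lq_self (Finset.mem_erase.mp hr).1
  · intro r hr hrq
    rw [map_prod]
    exact Finset.prod_eq_zero (Finset.mem_erase.mpr ⟨hrq, hr⟩) (Lq_vanish q r)

set_option maxHeartbeats 1000000 in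
theorem bezout2 (P Q : A2) (hP : P ≠ 0) (hQ : Q ≠ 0)
    (hpr : IsRelPrime P Q) (T : Finset (ℝ × ℝ))
    (hT : ∀ p ∈ T, aeval ![p.1, p.2] P = 0 ∧ aeval ![p.1, p.2] Q = 0) :
    T.card ≤ P.totalDegree * Q.totalDegree := by
  classical
  set m := P.totalDegree with hm
  set n := Q.totalDegree with hn
  set N := T.card with hN
  set d := m + n + N with hd
  set V : Submodule ℝ A2 := restrictTotalDegree (Fin 2) ℝ d with hV
  -- the evaluation map
  set E : V →ₗ[ℝ] (T → ℝ) :=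
    LinearMap.pi (fun q : T =>
      ((aeval (R := ℝ) ![(q : ℝ × ℝ).1, (q : ℝ × ℝ).2]).toLinearMap).comp V.subtype)
    with hE
  have hEapp : ∀ (f : V) (q : T), E f q = aeval ![(q : ℝ × ℝ).1, (q : ℝ × ℝ).2] (f : A2) :=
    fun f q => rfl
  have Esurj : Function.Surjective E := by
    intro v
    have hfs : ∀ q : T, ∃ f : A2, f.totalDegree ≤ T.card - 1 ∧
        aeval ![(q : ℝ × ℝ).1, (q : ℝ × ℝ).2] f = 1 ∧
        ∀ r ∈ T, r ≠ (q : ℝ × ℝ) → aeval ![r.1, r.2] f = 0 := fun q => interp T q.2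
    choose f hdeg hone hzero using hfs
    have hmem : (∑ q : T, v q • f q) ∈ V := by
      rw [hV, mem_restrictTotalDegree]
      refine (totalDegree_finset_sum _ _).trans ?_
      rw [Finset.sup_le_iff]
      intro q _
      refine (totalDegree_smul_le _ _).trans ((hdeg q).trans (by omega))
    refine ⟨⟨_, hmem⟩, ?_⟩
    ext p
    rw [hEapp]
    simp only [Submodule.coe_mk]
    rw [map_sum]
    rw [Finset.sum_eq_single p]
    · simp only [map_smul, smul_eq_mul]
      rw [hone p]
      ring
    · intro q _ hqp
      simp only [map_smul, smul_eq_mul]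
      rw [hzero q p.1 p.2 (fun hc => hqp (Subtype.ext hc).symm)]
      ring
    · intro h
      exact absurd (Finset.mem_univ p) h
  -- submodules
  set Wp : Submodule ℝ A2 :=
    (restrictTotalDegree (Fin 2) ℝ (d - m)).map (LinearMap.mulLeft ℝ P) with hWp
  set Wq : Submodule ℝ A2 :=
    (restrictTotalDegree (Fin 2) ℝ (d - n)).map (LinearMap.mulLeft ℝ Q) with hWq
  have hPinj : Function.Injective (LinearMap.mulLeft ℝ P) := fun a b hab =>
    mul_left_cancel₀ hP hab
  have hQinj : Function.Injective (LinearMap.mulLeft ℝ Q) := fun a b hab =>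
    mul_left_cancel₀ hQ hab
  have hPQinj : Function.Injective (LinearMap.mulLeft ℝ (P * Q)) := fun a b hab =>
    mul_left_cancel₀ (mul_ne_zero hP hQ) hab
  haveI : FiniteDimensional ℝ Wp :=
    Module.Finite.equiv (Submodule.equivMapOfInjective _ hPinj _)
  haveI : FiniteDimensional ℝ Wq :=
    Module.Finite.equiv (Submodule.equivMapOfInjective _ hQinj _)
  have hrkp : Module.finrank ℝ Wp
      = Module.finrank ℝ (restrictTotalDegree (Fin 2) ℝ (d - m)) :=
    (LinearEquiv.finrank_eq (Submodule.equivMapOfInjective _ hPinj _)).symm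
  have hrkq : Module.finrank ℝ Wq
      = Module.finrank ℝ (restrictTotalDegree (Fin 2) ℝ (d - n)) :=
    (LinearEquiv.finrank_eq (Submodule.equivMapOfInjective _ hQinj _)).symm
  -- the intersection
  have hinf : Wp ⊓ Wq
      = (restrictTotalDegree (Fin 2) ℝ (d - m - n)).map (LinearMap.mulLeft ℝ (P * Q)) := by
    apply le_antisymm
    · rintro z ⟨⟨a, ha, rfl⟩, ⟨b, hb, hz⟩⟩
      simp only [SetLike.mem_coe, mem_restrictTotalDegree] at ha hb
      simp only [LinearMap.mulLeft_apply] at hz ⊢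
      have hdvd : Q ∣ a := by
        refine hpr.symm.dvd_of_dvd_mul_left ?_
        exact ⟨b, hz.symm⟩
      obtain ⟨c, rfl⟩ := hdvd
      rcases eq_or_ne c 0 with rfl | hc
      · simp only [mul_zero]
        exact Submodule.zero_mem _
      · refine Submodule.mem_map.mpr ⟨c, ?_, by rw [LinearMap.mulLeft_apply]; ring⟩
        rw [mem_restrictTotalDegree]
        rw [totalDegree_mul_eq' hQ hc] at ha
        omega
    · rintro z ⟨c, hc, rfl⟩
      simp only [SetLike.mem_coe, mem_restrictTotalDegree] at hc
      simp only [LinearMap.mulLeft_apply]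
      constructor
      · refine Submodule.mem_map.mpr ⟨Q * c, ?_, by rw [LinearMap.mulLeft_apply]; ring⟩
        rw [mem_restrictTotalDegree]
        refine (totalDegree_mul _ _).trans ?_
        rw [← hn]
        omega
      · refine Submodule.mem_map.mpr ⟨P * c, ?_, by rw [LinearMap.mulLeft_apply]; ring⟩
        rw [mem_restrictTotalDegree]
        refine (totalDegree_mul _ _).trans ?_
        rw [← hm]
        omega
  have hrkinf : Module.finrank ℝ (Wp ⊓ Wq : Submodule ℝ A2)
      = Module.finrank ℝ (restrictTotalDegree (Fin 2) ℝ (d - m - n)) := by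
    rw [hinf]
    exact (LinearEquiv.finrank_eq (Submodule.equivMapOfInjective _ hPQinj _)).symm
  -- sup is inside V
  have hsupV : Wp ⊔ Wq ≤ V := by
    rw [sup_le_iff]
    constructor
    · rintro z ⟨a, ha, rfl⟩
      simp only [SetLike.mem_coe, mem_restrictTotalDegree] at ha
      show (LinearMap.mulLeft ℝ P) a ∈ restrictTotalDegree (Fin 2) ℝ d
      rw [mem_restrictTotalDegree, LinearMap.mulLeft_apply]
      refine (totalDegree_mul _ _).trans ?_
      rw [← hm]; omega
    · rintro z ⟨a, ha, rfl⟩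
      simp only [SetLike.mem_coe, mem_restrictTotalDegree] at ha
      show (LinearMap.mulLeft ℝ Q) a ∈ restrictTotalDegree (Fin 2) ℝ d
      rw [mem_restrictTotalDegree, LinearMap.mulLeft_apply]
      refine (totalDegree_mul _ _).trans ?_
      rw [← hn]; omega
  -- pull back to V
  set Wv : Submodule ℝ V := (Wp ⊔ Wq).comap V.subtype with hWv
  have hrkWv : Module.finrank ℝ Wv = Module.finrank ℝ (Wp ⊔ Wq : Submodule ℝ A2) := by
    have hmap : Wv.map V.subtype = Wp ⊔ Wq := by
      rw [hWv, Submodule.map_comap_subtype]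
      exact inf_eq_right.mpr hsupV
    rw [← hmap]
    exact LinearEquiv.finrank_eq (Submodule.equivMapOfInjective _ V.injective_subtype _)
  -- Wv is in the kernel of E
  have hker : Wv ≤ LinearMap.ker E := by
    intro f hf
    rw [LinearMap.mem_ker]
    rw [hWv, Submodule.mem_comap] at hf
    obtain ⟨a, ha, b, hb, hab⟩ := Submodule.mem_sup.mp hf
    obtain ⟨a', _, rfl⟩ := ha
    obtain ⟨b', _, rfl⟩ := hb
    have hf2 : (f : A2) = P * a' + Q * b' := by
      have h3 := hab.symm
      simpa only [Submodule.subtype_apply, LinearMap.mulLeft_apply] using h3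
    ext p
    rw [hEapp, hf2]
    simp only [map_add, map_mul, Pi.zero_apply]
    rw [(hT p p.2).1, (hT p p.2).2]
    ring
  -- rank computations
  have hrange : Module.finrank ℝ (LinearMap.range E) = N := by
    rw [LinearMap.range_eq_top.mpr Esurj]
    rw [finrank_top]
    rw [Module.finrank_fintype_fun_eq_card]
    simp [hN]
  have hrn := LinearMap.finrank_range_add_finrank_ker E
  have hkerle : Module.finrank ℝ Wv ≤ Module.finrank ℝ (LinearMap.ker E) :=
    Submodule.finrank_mono hker
  have hsupinf := Submodule.finrank_sup_add_finrank_inf_eq Wp Wq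
  -- dimension of V
  have key : N + Module.finrank ℝ (Wp ⊔ Wq : Submodule ℝ A2) ≤ Module.finrank ℝ V := by
    rw [hrkWv] at hkerle
    omega
  -- numerical values
  have b0 := rank2' d
  have b1 := rank2' (d - m)
  have b2 := rank2' (d - n)
  have b3 := rank2' (d - m - n)
  have e1 : d - m = n + N := by omega
  have e2 : d - n = m + N := by omega
  have e3 : d - m - n = N := by omega
  rw [hrkp, hrkq, hrkinf, e3, e1, e2] at hsupinf
  rw [← hV] at b0
  rw [hd] at b0
  rw [e1] at b1
  rw [e2] at b2
  rw [e3] at b3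
  -- final arithmetic
  nlinarith [key, hsupinf, b0, b1, b2, b3]


open MvPolynomial in
lemma aeval_sub_X (i : Fin 2) (a b : ℝ) (p : Polynomial ℝ) :
    MvPolynomial.aeval ![a, b] (Polynomial.aeval (MvPolynomial.X i : A2) p)
      = p.eval (![a, b] i) := by
  rw [← Polynomial.aeval_algHom_apply]
  simp

open MvPolynomial in
lemma pderiv_aeval_X (i j : Fin 2) (p : Polynomial ℝ) :
    pderiv i (Polynomial.aeval (MvPolynomial.X j : A2) p)
      = if i = j then Polynomial.aeval (MvPolynomial.X j : A2) (Polynomial.derivative p)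
        else 0 := by
  induction p using Polynomial.induction_on' with
  | add f g hf hg => simp [hf, hg]; split_ifs <;> simp
  | monomial n a =>
    rw [Polynomial.aeval_monomial, Polynomial.derivative_monomial]
    split_ifs with h
    · subst h
      simp only [pderiv_C_mul, pderiv_pow, pderiv_X_self, mul_one, algebraMap_eq,
        Polynomial.aeval_monomial, map_mul, map_natCast]
      ring
    · simp [algebraMap_eq, pderiv_C_mul, pderiv_pow, pderiv_X_of_ne (Ne.symm h)]

open MvPolynomial in
lemma jac_dvd (g a b : A2) :
    g ∣ pderiv 0 (g * a) * pderiv 1 (g * b) - pderiv 0 (g * b) * pderiv 1 (g * a) := by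
  refine ⟨pderiv 0 g * (a * pderiv 1 b - b * pderiv 1 a)
    + pderiv 1 g * (b * pderiv 0 a - a * pderiv 0 b)
    + g * (pderiv 0 a * pderiv 1 b - pderiv 0 b * pderiv 1 a), ?_⟩
  simp only [pderiv_mul]
  ring

def sx (i : Fin 2) (p : Polynomial ℝ) : A2 := Polynomial.aeval (MvPolynomial.X i) p

lemma sx_eval (i : Fin 2) (a b : ℝ) (p : Polynomial ℝ) :
    MvPolynomial.aeval ![a, b] (sx i p) = p.eval (![a, b] i) := aeval_sub_X i a b p

def geomP (p : Polynomial ℝ) : A2 :=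
  ∑ k ∈ p.support, MvPolynomial.C (p.coeff k) *
    ∑ i ∈ Finset.range k, MvPolynomial.X 0 ^ i * MvPolynomial.X (1 : Fin 2) ^ (k - 1 - i)

lemma sx_eq_sum (i : Fin 2) (p : Polynomial ℝ) :
    sx i p = ∑ k ∈ p.support, MvPolynomial.C (p.coeff k) * MvPolynomial.X i ^ k := by
  rw [sx, Polynomial.aeval_def, Polynomial.eval₂_eq_sum, Polynomial.sum]
  simp [MvPolynomial.algebraMap_eq]

lemma geomP_mul (p : Polynomial ℝ) :
    geomP p * (MvPolynomial.X 0 - MvPolynomial.X 1) = sx 0 p - sx 1 p := by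
  rw [geomP, sx_eq_sum, sx_eq_sum, Finset.sum_mul, ← Finset.sum_sub_distrib]
  apply Finset.sum_congr rfl
  intro k _
  rw [mul_assoc, geom_sum₂_mul, mul_sub]

lemma geomP_deg (p : Polynomial ℝ) : (geomP p).totalDegree ≤ p.natDegree - 1 := by
  rw [geomP]
  refine (MvPolynomial.totalDegree_finset_sum _ _).trans ?_
  rw [Finset.sup_le_iff]
  intro k hk
  have hk' : k ≤ p.natDegree := Polynomial.le_natDegree_of_mem_supp k hk
  refine (MvPolynomial.totalDegree_mul _ _).trans ?_
  rw [MvPolynomial.totalDegree_C, zero_add]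
  refine (MvPolynomial.totalDegree_finset_sum _ _).trans ?_
  rw [Finset.sup_le_iff]
  intro i hi
  rw [Finset.mem_range] at hi
  refine (MvPolynomial.totalDegree_mul _ _).trans ?_
  rw [MvPolynomial.totalDegree_X_pow, MvPolynomial.totalDegree_X_pow]
  omega

lemma sx_sub_ne_zero {p : Polynomial ℝ} (hp : p.derivative ≠ 0) : sx 0 p - sx 1 p ≠ 0 := by
  intro h
  apply hp
  have hconst : ∀ t : ℝ, p.eval t = p.eval 0 := by
    intro t
    have h2 := congrArg (MvPolynomial.aeval ![t, (0 : ℝ)]) h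
    rw [map_sub, sx_eval, sx_eval, map_zero] at h2
    simpa using sub_eq_zero.mp h2
  have : p = Polynomial.C (p.eval 0) := by
    apply Polynomial.funext
    intro t
    rw [Polynomial.eval_C, hconst t]
  rw [this, Polynomial.derivative_C]

open Polynomial

theorem stmt_8 (x y : Polynomial ℝ)
    (hreg : ∀ t : ℝ, ¬(x.derivative.eval t = 0 ∧ y.derivative.eval t = 0))
    (hdouble : ∀ r s u : ℝ, r ≠ s → s ≠ u → r ≠ u →
      ¬(x.eval r = x.eval s ∧ x.eval s = x.eval u ∧
        y.eval r = y.eval s ∧ y.eval s = y.eval u))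
    (htrans : ∀ r s : ℝ, r ≠ s → x.eval r = x.eval s → y.eval r = y.eval s →
      x.derivative.eval r * y.derivative.eval s
        - x.derivative.eval s * y.derivative.eval r ≠ 0) :
    let D : Set (ℝ × ℝ) :=
      {p | ∃ r s : ℝ, r ≠ s ∧ (x.eval r, y.eval r) = p ∧ (x.eval s, y.eval s) = p}
    D.Finite ∧ 2 * D.ncard ≤ (x.natDegree - 1) * (y.natDegree - 1) := by
  intro D
  classical
  -- the set of parameter pairs
  set S : Set (ℝ × ℝ) :=
    {p : ℝ × ℝ | p.1 ≠ p.2 ∧ x.eval p.1 = x.eval p.2 ∧ y.eval p.1 = y.eval p.2} with hS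
  -- degenerate cases first
  by_cases hdx : x.derivative = 0
  · have hD : D = ∅ := by
      rw [Set.eq_empty_iff_forall_notMem]
      rintro p ⟨r, s, hrs, h1, h2⟩
      have hx : x.eval r = x.eval s := by
        have := congrArg Prod.fst (h1.trans h2.symm); simpa using this
      have hy : y.eval r = y.eval s := by
        have := congrArg Prod.snd (h1.trans h2.symm); simpa using this
      apply htrans r s hrs hx hy
      rw [hdx]
      simp
    rw [hD]
    simp
  by_cases hdy : y.derivative = 0
  · have hD : D = ∅ := by
      rw [Set.eq_empty_iff_forall_notMem]
      rintro p ⟨r, s, hrs, h1, h2⟩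
      have hx : x.eval r = x.eval s := by
        have := congrArg Prod.fst (h1.trans h2.symm); simpa using this
      have hy : y.eval r = y.eval s := by
        have := congrArg Prod.snd (h1.trans h2.symm); simpa using this
      apply htrans r s hrs hx hy
      rw [hdy]
      simp
    rw [hD]
    simp
  -- main case
  have hFx : sx 0 x - sx 1 x ≠ 0 := sx_sub_ne_zero hdx
  have hFy : sx 0 y - sx 1 y ≠ 0 := sx_sub_ne_zero hdy
  have hPx : geomP x ≠ 0 := by
    intro h
    apply hFx
    rw [← geomP_mul, h, zero_mul]
  have hQy : geomP y ≠ 0 := by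
    intro h
    apply hFy
    rw [← geomP_mul, h, zero_mul]
  -- gcd setup
  letI : NormalizationMonoid A2 := UniqueFactorizationMonoid.normalizationMonoid.toNormalizationMonoid
  letI : GCDMonoid A2 := UniqueFactorizationMonoid.toGCDMonoid A2
  set G := gcd (geomP x) (geomP y) with hGdef
  have hG0 : G ≠ 0 := by
    intro h
    rw [hGdef, gcd_eq_zero_iff] at h
    exact hPx h.1
  obtain ⟨P', hP'⟩ : G ∣ geomP x := gcd_dvd_left _ _
  obtain ⟨Q', hQ'⟩ : G ∣ geomP y := gcd_dvd_right _ _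
  have hP'0 : P' ≠ 0 := fun h => hPx (by rw [hP', h, mul_zero])
  have hQ'0 : Q' ≠ 0 := fun h => hQy (by rw [hQ', h, mul_zero])
  have hrel : IsRelPrime P' Q' := by
    intro e heP heQ
    have h1 : G * e ∣ geomP x := by
      obtain ⟨k, hk⟩ := heP
      refine ⟨k, ?_⟩
      rw [hP', hk]; ring
    have h2 : G * e ∣ geomP y := by
      obtain ⟨k, hk⟩ := heQ
      refine ⟨k, ?_⟩
      rw [hQ', hk]; ring
    have h3 : G * e ∣ G := dvd_gcd h1 h2
    obtain ⟨k, hk⟩ := h3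
    have : (1 : A2) = e * k := by
      apply mul_left_cancel₀ hG0
      rw [mul_one, ← mul_assoc, ← hk]
    exact IsUnit.of_mul_eq_one k this.symm
  -- degree bounds
  have hdegP' : P'.totalDegree ≤ x.natDegree - 1 := by
    refine le_trans ?_ (geomP_deg x)
    rw [hP', totalDegree_mul_eq' hG0 hP'0]
    omega
  have hdegQ' : Q'.totalDegree ≤ y.natDegree - 1 := by
    refine le_trans ?_ (geomP_deg y)
    rw [hQ', totalDegree_mul_eq' hG0 hQ'0]
    omega
  -- G divides the transversality polynomial
  set dpol : A2 := sx 0 x.derivative * sx 1 y.derivative - sx 1 x.derivative * sx 0 y.derivative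
    with hdpol
  have hGdvdD : G ∣ dpol := by
    obtain ⟨Ax, hAx⟩ : G ∣ sx 0 x - sx 1 x := by
      refine dvd_trans ⟨P', hP'⟩ ?_
      exact ⟨MvPolynomial.X 0 - MvPolynomial.X 1, (geomP_mul x).symm⟩
    obtain ⟨Bx, hBx⟩ : G ∣ sx 0 y - sx 1 y := by
      refine dvd_trans ⟨Q', hQ'⟩ ?_
      exact ⟨MvPolynomial.X 0 - MvPolynomial.X 1, (geomP_mul y).symm⟩
    have hJ := jac_dvd G Ax Bx
    rw [← hAx, ← hBx] at hJ
    have hcomp : MvPolynomial.pderiv 0 (sx 0 x - sx 1 x) * MvPolynomial.pderiv 1 (sx 0 y - sx 1 y)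
        - MvPolynomial.pderiv 0 (sx 0 y - sx 1 y) * MvPolynomial.pderiv 1 (sx 0 x - sx 1 x)
        = -dpol := by
      rw [hdpol]
      simp only [map_sub, sx, pderiv_aeval_X]
      norm_num
      ring
    rw [hcomp] at hJ
    exact (dvd_neg).mp hJ
  -- points of S are zeros of P' and Q'
  have hSzero : ∀ p ∈ S, MvPolynomial.aeval ![p.1, p.2] P' = 0 ∧
      MvPolynomial.aeval ![p.1, p.2] Q' = 0 := by
    rintro p ⟨hne, hxx, hyy⟩
    have hsub : MvPolynomial.aeval ![p.1, p.2] (MvPolynomial.X 0 - MvPolynomial.X 1 : A2)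
        = p.1 - p.2 := by simp
    have hFxp : MvPolynomial.aeval ![p.1, p.2] (sx 0 x - sx 1 x) = 0 := by
      rw [map_sub, sx_eval, sx_eval]
      simpa using sub_eq_zero.mpr hxx
    have hFyp : MvPolynomial.aeval ![p.1, p.2] (sx 0 y - sx 1 y) = 0 := by
      rw [map_sub, sx_eval, sx_eval]
      simpa using sub_eq_zero.mpr hyy
    have hPxp : MvPolynomial.aeval ![p.1, p.2] (geomP x) = 0 := by
      have := congrArg (MvPolynomial.aeval ![p.1, p.2]) (geomP_mul x)
      rw [map_mul, hsub, hFxp] at this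
      rcases mul_eq_zero.mp this with h | h
      · exact h
      · exact absurd (sub_eq_zero.mp h) hne
    have hQyp : MvPolynomial.aeval ![p.1, p.2] (geomP y) = 0 := by
      have := congrArg (MvPolynomial.aeval ![p.1, p.2]) (geomP_mul y)
      rw [map_mul, hsub, hFyp] at this
      rcases mul_eq_zero.mp this with h | h
      · exact h
      · exact absurd (sub_eq_zero.mp h) hne
    have hGp : MvPolynomial.aeval ![p.1, p.2] G ≠ 0 := by
      intro hg
      obtain ⟨R, hR⟩ := hGdvdD
      have hdp : MvPolynomial.aeval ![p.1, p.2] dpol = 0 := by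
        rw [hR, map_mul, hg, zero_mul]
      rw [hdpol] at hdp
      simp only [map_sub, map_mul, sx_eval] at hdp
      apply htrans p.1 p.2 hne hxx hyy
      simpa using hdp
    constructor
    · have := congrArg (MvPolynomial.aeval ![p.1, p.2]) hP'
      rw [hPxp, map_mul] at this
      rcases mul_eq_zero.mp this.symm with h | h
      · exact absurd h hGp
      · exact h
    · have := congrArg (MvPolynomial.aeval ![p.1, p.2]) hQ'
      rw [hQyp, map_mul] at this
      rcases mul_eq_zero.mp this.symm with h | h
      · exact absurd h hGp
      · exact h
  -- every finite subset of S is small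
  have hcard : ∀ T : Finset (ℝ × ℝ), ↑T ⊆ S →
      T.card ≤ (x.natDegree - 1) * (y.natDegree - 1) := by
    intro T hT
    refine (bezout2 P' Q' hP'0 hQ'0 hrel T fun p hp => hSzero p (hT hp)).trans ?_
    exact Nat.mul_le_mul hdegP' hdegQ'
  -- S is finite
  have hSfin : S.Finite := by
    by_contra h
    obtain ⟨T, hTsub, hTcard⟩ := Set.Infinite.exists_subset_card_eq h
      ((x.natDegree - 1) * (y.natDegree - 1) + 1)
    have := hcard T hTsub
    omega
  -- D is the image of S
  set f : ℝ × ℝ → ℝ × ℝ := fun p => (x.eval p.1, y.eval p.1) with hf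
  have hDim : D = f '' S := by
    ext p
    constructor
    · rintro ⟨r, s, hrs, h1, h2⟩
      have hx : x.eval r = x.eval s := by
        have := congrArg Prod.fst (h1.trans h2.symm); simpa using this
      have hy : y.eval r = y.eval s := by
        have := congrArg Prod.snd (h1.trans h2.symm); simpa using this
      exact ⟨(r, s), ⟨hrs, hx, hy⟩, by rw [hf]; simpa using h1⟩
    · rintro ⟨⟨r, s⟩, ⟨hrs, hx, hy⟩, rfl⟩
      exact ⟨r, s, hrs, rfl, by simp [hf, hx.symm, hy.symm]⟩
  constructor
  · rw [hDim]
    exact hSfin.image f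
  -- the counting argument
  · set Sf := hSfin.toFinset with hSf
    have hDcard : D.ncard = (Sf.image f).card := by
      rw [hDim, ← Set.Finite.coe_toFinset hSfin, ← Finset.coe_image, Set.ncard_coe_finset]
    have hfiber : 2 * (Sf.image f).card ≤ Sf.card := by
      have hsum : ∀ b ∈ Sf.image f, 2 ≤ (Sf.filter fun a => f a = b).card := by
        intro b hb
        obtain ⟨⟨r, s⟩, hrsSf, rfl⟩ := Finset.mem_image.mp hb
        obtain ⟨hne, hx, hy⟩ := (hSfin.mem_toFinset).mp hrsSf
        simp only at hne hx hy
        have hsr : (s, r) ∈ Sf := (hSfin.mem_toFinset).mpr ⟨Ne.symm hne, hx.symm, hy.symm⟩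
        refine Finset.one_lt_card.mpr ⟨(r, s), ?_, (s, r), ?_, ?_⟩
        · exact Finset.mem_filter.mpr ⟨hrsSf, rfl⟩
        · refine Finset.mem_filter.mpr ⟨hsr, ?_⟩
          rw [hf]
          simp only
          exact Prod.ext hx.symm hy.symm
        · intro hc
          exact hne (congrArg Prod.fst hc)
      calc 2 * (Sf.image f).card = ∑ _b ∈ Sf.image f, 2 := by
            rw [Finset.sum_const, smul_eq_mul, mul_comm]
        _ ≤ ∑ b ∈ Sf.image f, (Sf.filter fun a => f a = b).card := Finset.sum_le_sum hsum
        _ = Sf.card := (Finset.card_eq_sum_card_image f Sf).symm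
    have hSfcard : Sf.card ≤ (x.natDegree - 1) * (y.natDegree - 1) := by
      apply hcard
      rw [hSf, Set.Finite.coe_toFinset]
    omega
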